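/- Let r ∈ (0,2], K, L > 0, and let X = (X_{ij})_{i≤m,j≤n} have independent mean-zero entries with P(|X_{ij}| ≥ t) ≤ K e^{−t^r/L} for all t ≥ 0. Then for all 1 ≤ p, q ≤ ∞, (E ‖X_A : ℓ_p^n → ℓ_q^m‖²)^{1/2} ≲_{r,K,L} (m+n)^{1/r} ‖A∘A : ℓ_{p/2}^n → ℓ_{q/2}^m‖^{1/2}, where X_A = (a_{ij}X_{ij}). -/

import Mathlib

open MeasureTheory ProbabilityTheory
open scoped ENNReal

/-- The ℓ_p (quasi-)norm on ℝ^n, for p ∈ (0,∞]. -/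
noncomputable def lpNorm (p : ℝ≥0∞) {n : ℕ} (x : Fin n → ℝ) : ℝ :=
  if p = ⊤ then ⨆ j, |x j| else (∑ j, |x j| ^ p.toReal) ^ (1 / p.toReal)

/-- The operator (quasi-)norm of a matrix `B` acting from ℓ_p^n to ℓ_q^m. -/
noncomputable def opNorm (p q : ℝ≥0∞) {m n : ℕ} (B : Fin m → Fin n → ℝ) : ℝ :=
  sSup {c | ∃ x : Fin n → ℝ, lpNorm p x ≤ 1 ∧ c = lpNorm q (fun i => ∑ j, B i j * x j)}

namespace Stmt17

variable {n m : ℕ}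

lemma le_supAbs (y : Fin n → ℝ) (j : Fin n) : |y j| ≤ ⨆ j', |y j'| :=
  le_ciSup (Set.Finite.bddAbove (Set.finite_range fun j' => |y j'|)) j

lemma le_supSum (S : Fin m → ℝ) (i : Fin m) : S i ≤ ⨆ i', S i' :=
  le_ciSup (Set.Finite.bddAbove (Set.finite_range S)) i


lemma lpNorm_nonneg (p : ℝ≥0∞) (x : Fin n → ℝ) : 0 ≤ lpNorm p x := by
  unfold _root_.lpNorm
  split_ifs with h
  · exact Real.iSup_nonneg fun j => abs_nonneg _
  · exact Real.rpow_nonneg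
      (Finset.sum_nonneg fun j _ => Real.rpow_nonneg (abs_nonneg _) _) _

lemma lpNorm_mono (p : ℝ≥0∞) {x y : Fin n → ℝ} (h : ∀ j, |x j| ≤ y j) :
    lpNorm p x ≤ lpNorm p y := by
  have hy : ∀ j, |y j| = y j := fun j => abs_of_nonneg ((abs_nonneg _).trans (h j))
  unfold _root_.lpNorm
  split
  · refine Real.iSup_le (fun j => ?_) (Real.iSup_nonneg fun j => abs_nonneg _)
    exact ((h j).trans (hy j).symm.le).trans (le_supAbs y j)
  · refine Real.rpow_le_rpow
      (Finset.sum_nonneg fun j _ => Real.rpow_nonneg (abs_nonneg _) _) ?_ (by positivity)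
    refine Finset.sum_le_sum fun j _ =>
      Real.rpow_le_rpow (abs_nonneg _) ((h j).trans (hy j).symm.le) ENNReal.toReal_nonneg

lemma abs_le_lpNorm {p : ℝ≥0∞} (hp : p ≠ 0) (x : Fin n → ℝ) (j : Fin n) :
    |x j| ≤ lpNorm p x := by
  unfold _root_.lpNorm
  split_ifs with h
  · exact le_supAbs x j
  · have ht : 0 < p.toReal := ENNReal.toReal_pos hp h
    calc |x j| = (|x j| ^ p.toReal) ^ (1 / p.toReal) := by
          rw [← Real.rpow_mul (abs_nonneg _), mul_one_div_cancel ht.ne', Real.rpow_one]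
      _ ≤ _ := Real.rpow_le_rpow (Real.rpow_nonneg (abs_nonneg _) _)
          (Finset.single_le_sum (fun j _ => Real.rpow_nonneg (abs_nonneg _) _)
            (Finset.mem_univ j)) (by positivity)

lemma lpNorm_zero_fun {p : ℝ≥0∞} (hp : p ≠ 0) : lpNorm p (fun _ : Fin n => (0:ℝ)) = 0 := by
  unfold _root_.lpNorm
  split_ifs with h
  · simp
  · have ht : 0 < p.toReal := ENNReal.toReal_pos hp h
    rw [show (∑ _j : Fin n, |(0:ℝ)| ^ p.toReal) = 0 by simp [Real.zero_rpow ht.ne'],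
      Real.zero_rpow (one_div_ne_zero ht.ne')]

lemma lpNorm_isEmpty (q : ℝ≥0∞) (hq : q ≠ 0) (v : Fin 0 → ℝ) : lpNorm q v = 0 := by
  unfold _root_.lpNorm
  split_ifs with h
  · exact le_antisymm (Real.iSup_le (fun j => j.elim0) le_rfl)
      (Real.iSup_nonneg fun j => j.elim0)
  · have ht : 0 < q.toReal := ENNReal.toReal_pos hq h
    rw [show (∑ j : Fin 0, |v j| ^ q.toReal) = 0 by simp,
      Real.zero_rpow (one_div_ne_zero ht.ne')]

lemma lpNorm_const_mul_le {q : ℝ≥0∞} (hq : q ≠ 0) {c : ℝ} (hc : 0 ≤ c) (w : Fin m → ℝ) :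
    lpNorm q (fun i => c * w i) ≤ c * lpNorm q w := by
  unfold _root_.lpNorm
  split_ifs with h
  · refine Real.iSup_le (fun i => ?_)
      (mul_nonneg hc (Real.iSup_nonneg fun i => abs_nonneg _))
    rw [abs_mul, abs_of_nonneg hc]
    exact mul_le_mul_of_nonneg_left (le_supAbs w i) hc
  · have ht : 0 < q.toReal := ENNReal.toReal_pos hq h
    have : ∀ i : Fin m, |c * w i| ^ q.toReal = c ^ q.toReal * |w i| ^ q.toReal := by
      intro i; rw [abs_mul, abs_of_nonneg hc, Real.mul_rpow hc (abs_nonneg _)]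
    rw [Finset.sum_congr rfl fun i _ => this i, ← Finset.mul_sum,
      Real.mul_rpow (by positivity) (Finset.sum_nonneg fun i _ => by positivity),
      ← Real.rpow_mul hc, mul_one_div_cancel ht.ne', Real.rpow_one]

lemma div_two_eq_top {q : ℝ≥0∞} : q / 2 = ⊤ ↔ q = ⊤ := by
  simp [ENNReal.div_eq_top]

lemma div_two_toReal {q : ℝ≥0∞} (h : q ≠ ⊤) : (q / 2).toReal = q.toReal / 2 := by
  rw [ENNReal.toReal_div]
  norm_num

lemma lpNorm_sqrt_le {q : ℝ≥0∞} (hq : q ≠ 0) (u : Fin m → ℝ) (hu : ∀ i, 0 ≤ u i) :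
    lpNorm q (fun i => Real.sqrt (u i)) ≤ Real.sqrt (lpNorm (q/2) u) := by
  by_cases h : q = ⊤
  · subst h
    rw [show ((⊤:ℝ≥0∞)/2) = ⊤ from div_two_eq_top.2 rfl]
    unfold _root_.lpNorm
    rw [if_pos rfl, if_pos rfl]
    refine Real.iSup_le (fun i => ?_) (Real.sqrt_nonneg _)
    rw [abs_of_nonneg (Real.sqrt_nonneg _)]
    refine Real.sqrt_le_sqrt ?_
    exact (le_abs_self (u i)).trans (le_supAbs u i)
  · have h2 : q / 2 ≠ ⊤ := fun hc => h (div_two_eq_top.1 hc)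
    have ht : 0 < q.toReal := ENNReal.toReal_pos hq h
    unfold _root_.lpNorm
    rw [if_neg h, if_neg h2, div_two_toReal h]
    have habs : ∀ i : Fin m, |Real.sqrt (u i)| ^ q.toReal = |u i| ^ (q.toReal/2) := by
      intro i
      rw [abs_of_nonneg (Real.sqrt_nonneg _), abs_of_nonneg (hu i),
        Real.sqrt_eq_rpow, ← Real.rpow_mul (hu i)]
      norm_num
      ring_nf
    rw [Finset.sum_congr rfl fun i _ => habs i]
    rw [Real.sqrt_eq_rpow, ← Real.rpow_mul
      (Finset.sum_nonneg fun i _ => Real.rpow_nonneg (abs_nonneg _) _)]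
    apply le_of_eq
    congr 1
    field_simp

lemma lpNorm_sq_le {p : ℝ≥0∞} (hp0 : p ≠ 0) (x : Fin n → ℝ) :
    lpNorm (p/2) (fun j => x j ^ 2) ≤ lpNorm p x ^ 2 := by
  by_cases h : p = ⊤
  · subst h
    rw [show ((⊤:ℝ≥0∞)/2) = ⊤ from div_two_eq_top.2 rfl]
    unfold _root_.lpNorm
    rw [if_pos rfl, if_pos rfl]
    refine Real.iSup_le (fun j => ?_) (sq_nonneg _)
    rw [abs_of_nonneg (sq_nonneg _)]
    have h1 : |x j| ≤ ⨆ j, |x j| := le_supAbs x j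
    calc x j ^ 2 = |x j| ^ 2 := (sq_abs _).symm
      _ ≤ (⨆ j, |x j|) ^ 2 := by
          apply pow_le_pow_left₀ (abs_nonneg _) h1
  · have h2 : p / 2 ≠ ⊤ := fun hc => h (div_two_eq_top.1 hc)
    have ht : 0 < p.toReal := ENNReal.toReal_pos hp0 h
    unfold _root_.lpNorm
    rw [if_neg h, if_neg h2, div_two_toReal h]
    have habs : ∀ j : Fin n, |x j ^ 2| ^ (p.toReal/2) = |x j| ^ p.toReal := by
      intro j
      rw [abs_of_nonneg (sq_nonneg _), ← sq_abs, ← Real.rpow_natCast |x j| 2,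
        ← Real.rpow_mul (abs_nonneg _)]
      norm_num
      ring_nf
    rw [Finset.sum_congr rfl fun j _ => habs j]
    rw [← Real.rpow_natCast ((∑ j, |x j| ^ p.toReal) ^ (1 / p.toReal)) 2,
      ← Real.rpow_mul (Finset.sum_nonneg fun j _ => Real.rpow_nonneg (abs_nonneg _) _)]
    apply le_of_eq
    congr 1
    push_cast
    field_simp

def opSet (p q : ℝ≥0∞) (B : Fin m → Fin n → ℝ) : Set ℝ :=
  {c | ∃ x : Fin n → ℝ, lpNorm p x ≤ 1 ∧ c = lpNorm q (fun i => ∑ j, B i j * x j)}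

lemma opNorm_eq (p q : ℝ≥0∞) (B : Fin m → Fin n → ℝ) : opNorm p q B = sSup (opSet p q B) := rfl

lemma zero_mem_opSet {p q : ℝ≥0∞} (hp : p ≠ 0) (hq : q ≠ 0) (B : Fin m → Fin n → ℝ) :
    (0:ℝ) ∈ opSet p q B := by
  refine ⟨fun _ => 0, le_trans (le_of_eq (lpNorm_zero_fun hp)) zero_le_one, ?_⟩
  rw [show (fun i => ∑ j, B i j * (0:ℝ)) = (fun _ : Fin m => (0:ℝ)) by
    funext i; simp]
  exact (lpNorm_zero_fun hq).symm

lemma opSet_bddAbove {p q : ℝ≥0∞} (hp : p ≠ 0) (B : Fin m → Fin n → ℝ) :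
    BddAbove (opSet p q B) := by
  refine ⟨lpNorm q (fun i => ∑ j, |B i j|), ?_⟩
  rintro c ⟨x, hx, rfl⟩
  apply lpNorm_mono
  intro i
  calc |∑ j, B i j * x j| ≤ ∑ j, |B i j * x j| := Finset.abs_sum_le_sum_abs _ _
    _ ≤ ∑ j, |B i j| := by
        refine Finset.sum_le_sum fun j _ => ?_
        rw [abs_mul]
        exact mul_le_of_le_one_right (abs_nonneg _) ((abs_le_lpNorm hp x j).trans hx)

lemma opNorm_nonneg {p q : ℝ≥0∞} (hp : p ≠ 0) (hq : q ≠ 0) (B : Fin m → Fin n → ℝ) :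
    0 ≤ opNorm p q B :=
  le_csSup (opSet_bddAbove hp B) (zero_mem_opSet hp hq B)

lemma opNorm_zero_of_trivial {p q : ℝ≥0∞} (hp : p ≠ 0) (hq : q ≠ 0)
    (B : Fin m → Fin n → ℝ) (h : m = 0 ∨ n = 0) : opNorm p q B = 0 := by
  have : opSet p q B = {0} := by
    ext c
    constructor
    · rintro ⟨x, hx, rfl⟩
      rcases h with h | h
      · subst h
        exact lpNorm_isEmpty q hq _
      · subst h
        rw [show (fun i => ∑ j, B i j * x j) = (fun _ : Fin m => (0:ℝ)) by
          funext i; simp]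
        exact lpNorm_zero_fun hq
    · rintro rfl
      exact zero_mem_opSet hp hq B
  rw [opNorm_eq, this, csSup_singleton]

lemma one_le_ne_zero {p : ℝ≥0∞} (hp : 1 ≤ p) : p ≠ 0 := by
  intro h; rw [h] at hp; exact (by simp at hp : False).elim

lemma div_two_ne_zero {p : ℝ≥0∞} (hp : 1 ≤ p) : p / 2 ≠ 0 := by
  simp only [ne_eq, ENNReal.div_eq_zero_iff]
  push_neg
  exact ⟨one_le_ne_zero hp, by norm_num⟩

/-- The key deterministic bound. -/
lemma det_bound (p q : ℝ≥0∞) (hp : 1 ≤ p) (hq : 1 ≤ q)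
    (A C : Fin m → Fin n → ℝ) :
    opNorm p q (fun i j => A i j * C i j) ^ 2 ≤
      (⨆ i, ∑ j, C i j ^ 2) * opNorm (p/2) (q/2) (fun i j => A i j ^ 2) := by
  have hp0 := one_le_ne_zero hp
  have hq0 := one_le_ne_zero hq
  have hp20 := div_two_ne_zero hp
  have hq20 := div_two_ne_zero hq
  set M := ⨆ i, ∑ j, C i j ^ 2 with hMdef
  have hM : 0 ≤ M := Real.iSup_nonneg fun i => Finset.sum_nonneg fun j _ => sq_nonneg _
  set opN := opNorm (p/2) (q/2) (fun i j => A i j ^ 2) with hopNdef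
  have hopN : 0 ≤ opN := opNorm_nonneg hp20 hq20 _
  have key : ∀ x : Fin n → ℝ, lpNorm p x ≤ 1 →
      lpNorm q (fun i => ∑ j, (A i j * C i j) * x j) ≤ Real.sqrt (M * opN) := by
    intro x hx
    set u : Fin m → ℝ := fun i => ∑ j, A i j ^ 2 * x j ^ 2 with hudef
    have hu : ∀ i, 0 ≤ u i := fun i => Finset.sum_nonneg fun j _ => by positivity
    have step1 : ∀ i, |∑ j, (A i j * C i j) * x j| ≤ Real.sqrt M * Real.sqrt (u i) := by
      intro i
      have cs := Finset.sum_mul_sq_le_sq_mul_sq Finset.univ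
        (fun j => C i j) (fun j => A i j * x j)
      have hrw : ∑ j, C i j * (A i j * x j) = ∑ j, (A i j * C i j) * x j := by
        apply Finset.sum_congr rfl; intro j _; ring
      have hrw2 : ∑ j, (A i j * x j) ^ 2 = u i := by
        apply Finset.sum_congr rfl; intro j _; ring
      rw [hrw, hrw2] at cs
      have hSi : ∑ j, C i j ^ 2 ≤ M := le_supSum (fun i' => ∑ j, C i' j ^ 2) i
      calc |∑ j, (A i j * C i j) * x j|
          = Real.sqrt ((∑ j, (A i j * C i j) * x j) ^ 2) := (Real.sqrt_sq_eq_abs _).symm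
        _ ≤ Real.sqrt (M * u i) := by
            apply Real.sqrt_le_sqrt
            calc (∑ j, (A i j * C i j) * x j) ^ 2 ≤ (∑ j, C i j ^ 2) * u i := cs
              _ ≤ M * u i := mul_le_mul_of_nonneg_right hSi (hu i)
        _ = Real.sqrt M * Real.sqrt (u i) := Real.sqrt_mul hM _
    calc lpNorm q (fun i => ∑ j, (A i j * C i j) * x j)
        ≤ lpNorm q (fun i => Real.sqrt M * Real.sqrt (u i)) := lpNorm_mono q step1
      _ ≤ Real.sqrt M * lpNorm q (fun i => Real.sqrt (u i)) :=
          lpNorm_const_mul_le hq0 (Real.sqrt_nonneg _) _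
      _ ≤ Real.sqrt M * Real.sqrt (lpNorm (q/2) u) :=
          mul_le_mul_of_nonneg_left (lpNorm_sqrt_le hq0 u hu) (Real.sqrt_nonneg _)
      _ ≤ Real.sqrt M * Real.sqrt opN := by
          refine mul_le_mul_of_nonneg_left (Real.sqrt_le_sqrt ?_) (Real.sqrt_nonneg _)
          refine le_csSup (opSet_bddAbove hp20 _) ?_
          refine ⟨fun j => x j ^ 2, ?_, rfl⟩
          calc lpNorm (p/2) (fun j => x j ^ 2) ≤ lpNorm p x ^ 2 := lpNorm_sq_le hp0 x
            _ ≤ 1 := by nlinarith [lpNorm_nonneg p x]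
      _ = Real.sqrt (M * opN) := (Real.sqrt_mul hM _).symm
  have h1 : opNorm p q (fun i j => A i j * C i j) ≤ Real.sqrt (M * opN) := by
    apply Real.sSup_le _ (Real.sqrt_nonneg _)
    rintro c ⟨x, hx, rfl⟩
    exact key x hx
  have h2 : 0 ≤ opNorm p q (fun i j => A i j * C i j) := opNorm_nonneg hp0 hq0 _
  calc opNorm p q (fun i j => A i j * C i j) ^ 2
      ≤ Real.sqrt (M * opN) ^ 2 := pow_le_pow_left₀ h2 h1 2
    _ = M * opN := Real.sq_sqrt (mul_nonneg hM hopN)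




lemma integrable_of_bounded {Ω : Type} [MeasurableSpace Ω] {μ : Measure Ω}
    [IsProbabilityMeasure μ] {g : Ω → ℝ}
    (hg : Measurable g) {C : ℝ} (h : ∀ ω, |g ω| ≤ C) : Integrable g μ :=
  (integrable_const C).mono' hg.aestronglyMeasurable (ae_of_all _ h)

/-- Moments from ψ_r-type tails. -/
lemma moment_bound (r K L : ℝ) (hr0 : 0 < r) (hK : 0 < K) (hL : 0 < L) (k : ℕ) :
    ∃ C : ℝ, 0 < C ∧ ∀ (Ω : Type) (_ : MeasurableSpace Ω) (μ : Measure Ω),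
      IsProbabilityMeasure μ → ∀ Y : Ω → ℝ, Measurable Y →
      (∀ t : ℝ, 0 ≤ t → μ {ω | t ≤ |Y ω|} ≤ ENNReal.ofReal (K * Real.exp (-t ^ r / L))) →
      ∫⁻ ω, ENNReal.ofReal (|Y ω| ^ k) ∂μ ≤ ENNReal.ofReal C := by
  obtain ⟨s, hs⟩ : ∃ s : ℕ, ((k:ℝ) + 2) ≤ r * s := by
    refine ⟨⌈((k:ℝ)+2)/r⌉₊, ?_⟩
    have h1 : ((k:ℝ)+2)/r ≤ (⌈((k:ℝ)+2)/r⌉₊ : ℝ) := Nat.le_ceil _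
    calc ((k:ℝ)+2) = r * (((k:ℝ)+2)/r) := by field_simp
      _ ≤ r * _ := mul_le_mul_of_nonneg_left h1 hr0.le
  set D : ℝ := K * (s.factorial : ℝ) * L^s * 2^(k+2) + K with hD
  have hs1 : (1:ℝ) ≤ (s.factorial : ℝ) := by
    exact_mod_cast Nat.one_le_iff_ne_zero.2 s.factorial_ne_zero
  have hDpos : 0 < D := by positivity
  -- termwise bound
  have hterm : ∀ j : ℕ, ((j:ℝ)+1)^k * (K * Real.exp (-(j:ℝ)^r / L)) ≤ D / ((j:ℝ)+1)^2 := by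
    intro j
    have hj1 : (0:ℝ) < (j:ℝ)+1 := by positivity
    rw [le_div_iff₀ (by positivity)]
    rcases Nat.eq_zero_or_pos j with hj | hj
    · subst hj
      norm_num [Real.zero_rpow hr0.ne']
      have hpos : 0 ≤ K * (s.factorial : ℝ) * L^s * 2^(k+2) := by positivity
      linarith
    · have hjr : (1:ℝ) ≤ (j:ℝ) := by exact_mod_cast hj
      have hjpos : (0:ℝ) < (j:ℝ) := by linarith
      have hrspos : 0 < (j:ℝ)^(r*(s:ℝ)) := Real.rpow_pos_of_pos hjpos _
      set x : ℝ := (j:ℝ)^r / L with hx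
      have hxpos : 0 < x := div_pos (Real.rpow_pos_of_pos hjpos r) hL
      have hexp : Real.exp (-x) ≤ (s.factorial : ℝ) * L^s / (j:ℝ)^(r * (s:ℝ)) := by
        have h1 : x ^ s / (s.factorial : ℝ) ≤ Real.exp x :=
          Real.pow_div_factorial_le_exp x hxpos.le s
        have h3 : x ^ s = (j:ℝ)^(r * (s:ℝ)) / L^s := by
          rw [hx, div_pow, ← Real.rpow_natCast ((j:ℝ)^r) s, ← Real.rpow_mul hjpos.le]
        have h4 : 0 < x ^ s / (s.factorial : ℝ) := by positivity
        have h5 := inv_anti₀ h4 h1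
        rw [Real.exp_neg]
        refine h5.trans (le_of_eq ?_)
        rw [h3, div_div, inv_div]
        ring
      have hub : ((j:ℝ)+1)^(k+2) ≤ 2^(k+2) * (j:ℝ)^(r*(s:ℝ)) := by
        calc ((j:ℝ)+1)^(k+2) ≤ (2*(j:ℝ))^(k+2) :=
              pow_le_pow_left₀ (by positivity) (by linarith) _
          _ = 2^(k+2) * (j:ℝ)^(k+2) := mul_pow _ _ _
          _ ≤ 2^(k+2) * (j:ℝ)^(r*(s:ℝ)) := by
              have h6 : (j:ℝ)^((k+2:ℕ):ℝ) ≤ (j:ℝ)^(r*(s:ℝ)) := by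
                apply Real.rpow_le_rpow_of_exponent_le hjr
                push_cast
                linarith
              rw [Real.rpow_natCast] at h6
              nlinarith [pow_pos (by norm_num : (0:ℝ) < 2) (k+2)]
      calc ((j:ℝ)+1)^k * (K * Real.exp (-(j:ℝ)^r / L)) * ((j:ℝ)+1)^2
          = ((j:ℝ)+1)^(k+2) * (K * Real.exp (-x)) := by
            rw [neg_div, ← hx, pow_add]; ring
        _ ≤ (2^(k+2) * (j:ℝ)^(r*(s:ℝ))) *
              (K * ((s.factorial : ℝ) * L^s / (j:ℝ)^(r * (s:ℝ)))) := by
            apply mul_le_mul hub (mul_le_mul_of_nonneg_left hexp hK.le) _ (by positivity)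
            positivity
        _ = K * (s.factorial:ℝ) * L^s * 2^(k+2) *
              ((j:ℝ)^(r*(s:ℝ)) / (j:ℝ)^(r*(s:ℝ))) := by ring
        _ = K * (s.factorial:ℝ) * L^s * 2^(k+2) := by
            rw [div_self hrspos.ne', mul_one]
        _ ≤ D := by rw [hD]; linarith
  -- summability
  have hsum2 : Summable (fun j : ℕ => 1/(((j:ℝ)+1)^2)) := by
    have h := (Real.summable_one_div_nat_pow (p := 2)).2 (by norm_num)
    have h2 := (summable_nat_add_iff 1).2 h
    refine h2.congr fun j => ?_
    push_cast
    norm_num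
  have hsumD : Summable (fun j : ℕ => D/(((j:ℝ)+1)^2)) := by
    simpa [div_eq_mul_inv, mul_comm] using hsum2.mul_left D
  set C : ℝ := ∑' j : ℕ, D/(((j:ℝ)+1)^2) with hC
  have hCpos : 0 < C := by
    refine Summable.tsum_pos hsumD (fun j => by positivity) 0 (by norm_num [hDpos])
  refine ⟨C, hCpos, ?_⟩
  intro Ω mΩ μ hprob Y hY htail
  have mset : ∀ j : ℕ, MeasurableSet {ω : Ω | (j:ℝ) ≤ |Y ω|} :=
    fun j => measurableSet_le measurable_const hY.abs
  -- pointwise slicing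
  have hpt : ∀ ω : Ω, ENNReal.ofReal (|Y ω| ^ k) ≤
      ∑' j : ℕ, Set.indicator {ω : Ω | (j:ℝ) ≤ |Y ω|}
        (fun _ => ENNReal.ofReal (((j:ℝ)+1)^k)) ω := by
    intro ω
    set j0 : ℕ := ⌊|Y ω|⌋₊ with hj0
    have hmem : ω ∈ {ω : Ω | (j0:ℝ) ≤ |Y ω|} := by
      simp only [Set.mem_setOf_eq, hj0]
      exact Nat.floor_le (abs_nonneg _)
    have hlt : |Y ω| ≤ (j0:ℝ) + 1 := (Nat.lt_floor_add_one _).le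
    calc ENNReal.ofReal (|Y ω| ^ k) ≤ ENNReal.ofReal (((j0:ℝ)+1)^k) :=
          ENNReal.ofReal_le_ofReal (pow_le_pow_left₀ (abs_nonneg _) hlt k)
      _ = Set.indicator {ω : Ω | (j0:ℝ) ≤ |Y ω|}
            (fun _ => ENNReal.ofReal (((j0:ℝ)+1)^k)) ω :=
          (Set.indicator_of_mem hmem fun _ => ENNReal.ofReal (((j0:ℝ)+1)^k)).symm
      _ ≤ _ := ENNReal.le_tsum j0
  calc ∫⁻ ω, ENNReal.ofReal (|Y ω| ^ k) ∂μ
      ≤ ∫⁻ ω, ∑' j : ℕ, Set.indicator {ω : Ω | (j:ℝ) ≤ |Y ω|}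
          (fun _ => ENNReal.ofReal (((j:ℝ)+1)^k)) ω ∂μ := lintegral_mono hpt
    _ = ∑' j : ℕ, ∫⁻ ω, Set.indicator {ω : Ω | (j:ℝ) ≤ |Y ω|}
          (fun _ => ENNReal.ofReal (((j:ℝ)+1)^k)) ω ∂μ :=
        lintegral_tsum fun j => ((measurable_const.indicator (mset j)).aemeasurable)
    _ = ∑' j : ℕ, ENNReal.ofReal (((j:ℝ)+1)^k) * μ {ω : Ω | (j:ℝ) ≤ |Y ω|} := by
        refine tsum_congr fun j => ?_
        rw [lintegral_indicator_const (mset j)]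
    _ ≤ ∑' j : ℕ, ENNReal.ofReal (((j:ℝ)+1)^k) *
          ENNReal.ofReal (K * Real.exp (-(j:ℝ)^r / L)) := by
        refine ENNReal.tsum_le_tsum fun j => ?_
        exact mul_le_mul' le_rfl (htail (j:ℝ) (by positivity))
    _ = ∑' j : ℕ, ENNReal.ofReal (((j:ℝ)+1)^k * (K * Real.exp (-(j:ℝ)^r / L))) := by
        refine tsum_congr fun j => ?_
        rw [← ENNReal.ofReal_mul (show (0:ℝ) ≤ ((j:ℝ)+1)^k by positivity)]
    _ ≤ ∑' j : ℕ, ENNReal.ofReal (D/(((j:ℝ)+1)^2)) :=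
        ENNReal.tsum_le_tsum fun j => ENNReal.ofReal_le_ofReal (hterm j)
    _ = ENNReal.ofReal C := by
        rw [hC, ENNReal.ofReal_tsum_of_nonneg (fun j => by positivity) hsumD]







lemma conj_two : Real.HolderConjugate 2 2 := by
  rw [Real.holderConjugate_iff]
  norm_num

/-- Cauchy–Schwarz for the truncated second moment. -/
lemma truncated_second_moment {Ω : Type} [MeasurableSpace Ω] (μ : Measure Ω)
    (Y : Ω → ℝ) (hY : Measurable Y) (T : ℝ) :
    ∫⁻ ω, ENNReal.ofReal (if T ≤ |Y ω| then Y ω ^ 2 else 0) ∂μ ≤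
      (∫⁻ ω, ENNReal.ofReal (|Y ω| ^ 4) ∂μ) ^ ((1:ℝ)/2) *
        (μ {ω | T ≤ |Y ω|}) ^ ((1:ℝ)/2) := by
  set st : Set Ω := {ω | T ≤ |Y ω|} with hst
  have mst : MeasurableSet st := measurableSet_le measurable_const hY.abs
  set f : Ω → ℝ≥0∞ := fun ω => ENNReal.ofReal (Y ω ^ 2) with hf
  set g : Ω → ℝ≥0∞ := st.indicator (fun _ => 1) with hg
  have hfm : AEMeasurable f μ :=
    (ENNReal.measurable_ofReal.comp (hY.pow_const 2)).aemeasurable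
  have hgm : AEMeasurable g μ := (measurable_const.indicator mst).aemeasurable
  have hpt : ∀ ω, ENNReal.ofReal (if T ≤ |Y ω| then Y ω ^ 2 else 0) = (f * g) ω := by
    intro ω
    by_cases h : T ≤ |Y ω|
    · rw [if_pos h]
      have hgo : g ω = 1 := Set.indicator_of_mem (show ω ∈ st from h) _
      simp [hgo, hf]
    · rw [if_neg h]
      have hgo : g ω = 0 := Set.indicator_of_notMem (show ω ∉ st from h) _
      simp [hgo]
  have holder := ENNReal.lintegral_mul_le_Lp_mul_Lq μ conj_two hfm hgm
  have hf2 : ∀ ω, f ω ^ (2:ℝ) = ENNReal.ofReal (|Y ω| ^ 4) := by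
    intro ω
    show (ENNReal.ofReal (Y ω ^ 2)) ^ (2:ℝ) = _
    rw [ENNReal.ofReal_rpow_of_nonneg (sq_nonneg _) (by norm_num : (0:ℝ) ≤ 2)]
    congr 1
    rw [show (2:ℝ) = ((2:ℕ):ℝ) by norm_num, Real.rpow_natCast, ← pow_mul]
    rw [show |Y ω| ^ 4 = (|Y ω| ^ 2) ^ 2 from pow_mul _ 2 2, sq_abs, ← pow_mul]
  have hg2 : ∀ ω, g ω ^ (2:ℝ) = g ω := by
    intro ω
    simp only [hg]
    by_cases h : ω ∈ st
    · rw [Set.indicator_of_mem h]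
      exact ENNReal.one_rpow _
    · rw [Set.indicator_of_notMem h]
      exact ENNReal.zero_rpow_of_pos (by norm_num)
  have hgint : ∫⁻ ω, g ω ∂μ = μ st := by
    simp only [hg]
    rw [lintegral_indicator_const mst, one_mul]
  calc ∫⁻ ω, ENNReal.ofReal (if T ≤ |Y ω| then Y ω ^ 2 else 0) ∂μ
      = ∫⁻ ω, (f * g) ω ∂μ := lintegral_congr hpt
    _ ≤ (∫⁻ ω, f ω ^ (2:ℝ) ∂μ) ^ ((1:ℝ)/2) * (∫⁻ ω, g ω ^ (2:ℝ) ∂μ) ^ ((1:ℝ)/2) := holder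
    _ = (∫⁻ ω, ENNReal.ofReal (|Y ω| ^ 4) ∂μ) ^ ((1:ℝ)/2) * (μ st) ^ ((1:ℝ)/2) := by
        rw [lintegral_congr hf2, lintegral_congr hg2, hgint]

/-- Jensen for concave power on a probability space. -/
lemma lintegral_rpow_inv_le {Ω : Type} [MeasurableSpace Ω] (μ : Measure Ω)
    [IsProbabilityMeasure μ] {F : Ω → ℝ≥0∞} (hF : AEMeasurable F μ) {c : ℝ}
    (hc0 : 0 < c) (hc1 : c ≤ 1) :
    ∫⁻ ω, (F ω) ^ c ∂μ ≤ (∫⁻ ω, F ω ∂μ) ^ c := by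
  rcases eq_or_lt_of_le hc1 with h1 | h1
  · subst h1
    simp
  · have hpq : Real.HolderConjugate (1/c) (1/(1-c)) := by
      rw [Real.holderConjugate_iff]
      constructor
      · rw [lt_div_iff₀ hc0]; linarith
      · rw [one_div, one_div, inv_inv, inv_inv]; ring
    have hFc : AEMeasurable (fun ω => (F ω) ^ c) μ :=
      hF.pow_const c
    have holder := ENNReal.lintegral_mul_le_Lp_mul_Lq μ hpq hFc aemeasurable_const
      (g := fun _ => (1:ℝ≥0∞))
    simp only [Pi.mul_apply, mul_one, ENNReal.one_rpow, lintegral_const,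
      measure_univ, one_mul] at holder
    calc ∫⁻ ω, (F ω) ^ c ∂μ ≤ (∫⁻ ω, ((F ω) ^ c) ^ (1/c) ∂μ) ^ (1/(1/c)) := by
          simpa using holder
      _ = (∫⁻ ω, F ω ∂μ) ^ c := by
          rw [one_div_one_div]
          congr 1
          refine lintegral_congr fun ω => ?_
          rw [← ENNReal.rpow_mul, mul_one_div_cancel hc0.ne', ENNReal.rpow_one]

/-- The key moment induction for sums of independent bounded nonnegative variables. -/
lemma key_induction {Ω : Type} [MeasurableSpace Ω] {μ : Measure Ω} [IsProbabilityMeasure μ]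
    {n : ℕ} (f : Fin n → Ω → ℝ) (hmeas : ∀ j, Measurable (f j))
    {B c2 : ℝ} (hB : 0 ≤ B) (hc2 : 0 ≤ c2)
    (h0 : ∀ j ω, 0 ≤ f j ω) (hle : ∀ j ω, f j ω ≤ B)
    (hEf : ∀ j, ∫ ω, f j ω ∂μ ≤ c2)
    (hind : ∀ j : Fin n, IndepFun (fun ω => ∑ j' ∈ Finset.univ.erase j, f j' ω) (f j) μ) :
    ∀ (t : ℕ) (c : ℝ), 1 ≤ c →
      ∫ ω, (∑ j, f j ω + c * B) ^ t ∂μ ≤ ((n:ℝ) * c2 + (c + t - 1) * B) ^ t := by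
  have hSm : Measurable (fun ω => ∑ j, f j ω) :=
    Finset.measurable_sum _ (fun j _ => hmeas j)
  have hS0 : ∀ ω, 0 ≤ ∑ j, f j ω := fun ω => Finset.sum_nonneg fun j _ => h0 j ω
  have hSB : ∀ ω, ∑ j, f j ω ≤ (n:ℝ) * B := by
    intro ω
    calc ∑ j, f j ω ≤ ∑ _j : Fin n, B := Finset.sum_le_sum fun j _ => hle j ω
      _ = (n:ℝ) * B := by rw [Finset.sum_const]; simp [mul_comm]
  have hsum_mes : ∀ s : Finset (Fin n), Measurable (fun ω => ∑ j ∈ s, f j ω) :=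
    fun s => Finset.measurable_sum _ (fun j _ => hmeas j)
  have hsum0 : ∀ (s : Finset (Fin n)) (ω : Ω), 0 ≤ ∑ j ∈ s, f j ω :=
    fun s ω => Finset.sum_nonneg fun j _ => h0 j ω
  have hsumB : ∀ (s : Finset (Fin n)) (ω : Ω), ∑ j ∈ s, f j ω ≤ (n:ℝ) * B := by
    intro s ω
    calc ∑ j ∈ s, f j ω ≤ ∑ j, f j ω :=
          Finset.sum_le_sum_of_subset_of_nonneg (Finset.subset_univ s) (fun j _ _ => h0 j ω)
      _ ≤ (n:ℝ)*B := hSB ω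
  have hintpow : ∀ (s : Finset (Fin n)) (a : ℝ), 0 ≤ a → ∀ t : ℕ,
      Integrable (fun ω => (∑ j ∈ s, f j ω + a)^t) μ := by
    intro s a ha t
    refine integrable_of_bounded (((hsum_mes s).add_const a).pow_const t)
      (C := ((n:ℝ)*B + a)^t) fun ω => ?_
    have h1 := hsum0 s ω
    have h2 := hsumB s ω
    rw [abs_of_nonneg (pow_nonneg (by linarith) t)]
    exact pow_le_pow_left₀ (by linarith) (by linarith) t
  have hintf : ∀ j : Fin n, Integrable (f j) μ := by
    intro j
    refine integrable_of_bounded (hmeas j) (C := B) fun ω => ?_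
    rw [abs_of_nonneg (h0 j ω)]
    exact hle j ω
  have hintmul : ∀ (s : Finset (Fin n)) (a : ℝ), 0 ≤ a → ∀ (t : ℕ) (j : Fin n),
      Integrable (fun ω => (∑ j' ∈ s, f j' ω + a)^t * f j ω) μ := by
    intro s a ha t j
    refine integrable_of_bounded ((((hsum_mes s).add_const a).pow_const t).mul (hmeas j))
      (C := ((n:ℝ)*B + a)^t * B) fun ω => ?_
    have h1 := hsum0 s ω
    have h2 := hsumB s ω
    rw [abs_of_nonneg (mul_nonneg (pow_nonneg (by linarith) t) (h0 j ω))]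
    exact mul_le_mul (pow_le_pow_left₀ (by linarith) (by linarith) t) (hle j ω) (h0 j ω)
      (by positivity)
  intro t
  induction t with
  | zero => intro c hc; simp
  | succ t ih =>
    intro c hc
    have hcB : 0 ≤ c * B := mul_nonneg (by linarith) hB
    have hc1B : 0 ≤ (c+1) * B := mul_nonneg (by linarith) hB
    set I : ℝ := ∫ ω, (∑ j, f j ω + (c+1)*B)^t ∂μ with hI
    have hInn : 0 ≤ I := integral_nonneg fun ω => pow_nonneg (by have := hS0 ω; linarith) t
    have hIle : I ≤ ((n:ℝ) * c2 + (c + t) * B) ^ t := by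
      have h := ih (c+1) (by linarith)
      calc I ≤ ((n:ℝ) * c2 + ((c+1) + t - 1) * B) ^ t := h
        _ = ((n:ℝ) * c2 + (c + t) * B) ^ t := by ring_nf
    have hexpand : ∀ ω, (∑ j, f j ω + c*B)^(t+1)
        = (∑ j, (∑ j', f j' ω + c*B)^t * f j ω) + (c*B) * (∑ j, f j ω + c*B)^t := by
      intro ω
      rw [← Finset.mul_sum, pow_succ]
      ring
    rw [integral_congr_ae (ae_of_all _ hexpand)]
    rw [integral_add (integrable_finset_sum _ (fun j _ => hintmul Finset.univ (c*B) hcB t j))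
      ((hintpow Finset.univ (c*B) hcB t).const_mul _)]
    rw [integral_finset_sum _ (fun j _ => hintmul Finset.univ (c*B) hcB t j)]
    rw [integral_const_mul]
    -- per-index bound
    have hstep : ∀ j : Fin n, ∫ ω, (∑ j', f j' ω + c*B)^t * f j ω ∂μ ≤ c2 * I := by
      intro j
      have hbase : ∀ ω, ∑ j', f j' ω + c*B ≤ ∑ j' ∈ Finset.univ.erase j, f j' ω + (c+1)*B := by
        intro ω
        have hsplit : f j ω + ∑ j' ∈ Finset.univ.erase j, f j' ω = ∑ j', f j' ω :=
          Finset.add_sum_erase Finset.univ (fun j' => f j' ω) (Finset.mem_univ j)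
        have := hle j ω
        nlinarith [hB]
      have h1 : ∫ ω, (∑ j', f j' ω + c*B)^t * f j ω ∂μ ≤
          ∫ ω, (∑ j' ∈ Finset.univ.erase j, f j' ω + (c+1)*B)^t * f j ω ∂μ := by
        refine integral_mono (hintmul Finset.univ (c*B) hcB t j)
          (hintmul (Finset.univ.erase j) ((c+1)*B) hc1B t j) fun ω => ?_
        exact mul_le_mul_of_nonneg_right
          (pow_le_pow_left₀ (by have := hS0 ω; linarith) (hbase ω) t) (h0 j ω)
      have hIndep : IndepFun (fun ω => (∑ j' ∈ Finset.univ.erase j, f j' ω + (c+1)*B)^t)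
          (f j) μ := by
        have h := (hind j).comp (φ := fun v : ℝ => (v + (c+1)*B)^t) (ψ := id)
          ((measurable_id.add_const _).pow_const t) measurable_id
        exact h
      have h2 : ∫ ω, (∑ j' ∈ Finset.univ.erase j, f j' ω + (c+1)*B)^t * f j ω ∂μ =
          (∫ ω, (∑ j' ∈ Finset.univ.erase j, f j' ω + (c+1)*B)^t ∂μ) * ∫ ω, f j ω ∂μ :=
        hIndep.integral_mul_eq_mul_integral (hintpow _ _ hc1B t).aestronglyMeasurable
          (hintf j).aestronglyMeasurable
      have h3 : 0 ≤ ∫ ω, (∑ j' ∈ Finset.univ.erase j, f j' ω + (c+1)*B)^t ∂μ :=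
        integral_nonneg fun ω => pow_nonneg (by have := hsum0 (Finset.univ.erase j) ω; linarith) t
      have h4 : ∫ ω, (∑ j' ∈ Finset.univ.erase j, f j' ω + (c+1)*B)^t ∂μ ≤ I := by
        refine integral_mono (hintpow _ _ hc1B t) (hintpow Finset.univ _ hc1B t) fun ω => ?_
        refine pow_le_pow_left₀ (by have := hsum0 (Finset.univ.erase j) ω; linarith) ?_ t
        have : ∑ j' ∈ Finset.univ.erase j, f j' ω ≤ ∑ j', f j' ω :=
          Finset.sum_le_sum_of_subset_of_nonneg (Finset.subset_univ _) (fun j' _ _ => h0 j' ω)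
        linarith
      calc ∫ ω, (∑ j', f j' ω + c*B)^t * f j ω ∂μ
          ≤ (∫ ω, (∑ j' ∈ Finset.univ.erase j, f j' ω + (c+1)*B)^t ∂μ) * ∫ ω, f j ω ∂μ :=
            h1.trans (le_of_eq h2)
        _ ≤ (∫ ω, (∑ j' ∈ Finset.univ.erase j, f j' ω + (c+1)*B)^t ∂μ) * c2 :=
            mul_le_mul_of_nonneg_left (hEf j) h3
        _ ≤ I * c2 := mul_le_mul_of_nonneg_right h4 hc2
        _ = c2 * I := mul_comm _ _
    have hterm2 : ∫ ω, (∑ j, f j ω + c*B)^t ∂μ ≤ I := by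
      refine integral_mono (hintpow Finset.univ _ hcB t) (hintpow Finset.univ _ hc1B t) fun ω => ?_
      refine pow_le_pow_left₀ (by have := hS0 ω; linarith) ?_ t
      nlinarith [hB]
    calc (∑ j, ∫ ω, (∑ j', f j' ω + c*B)^t * f j ω ∂μ) + (c*B) * ∫ ω, (∑ j, f j ω + c*B)^t ∂μ
        ≤ (∑ _j : Fin n, c2 * I) + (c*B) * I := by
          refine add_le_add (Finset.sum_le_sum fun j _ => hstep j) ?_
          exact mul_le_mul_of_nonneg_left hterm2 hcB
      _ = ((n:ℝ) * c2 + c * B) * I := by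
          rw [Finset.sum_const]
          simp only [Finset.card_univ, Fintype.card_fin, nsmul_eq_mul]
          ring
      _ ≤ ((n:ℝ) * c2 + (c + t) * B) * ((n:ℝ) * c2 + (c + t) * B) ^ t := by
          refine mul_le_mul ?_ hIle hInn ?_
          · nlinarith [hB, mul_nonneg (Nat.cast_nonneg n : (0:ℝ) ≤ n) hc2]
          · nlinarith [hB, mul_nonneg (Nat.cast_nonneg n : (0:ℝ) ≤ n) hc2]
      _ = ((n:ℝ) * c2 + (c + ↑(t+1) - 1) * B) ^ (t+1) := by
          rw [pow_succ]
          push_cast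
          ring_nf



lemma one_add_log_rpow_le {a : ℝ} (ha : 1 ≤ a) {N : ℝ} (hN : 1 ≤ N) :
    (1 + Real.log N) ^ a ≤ (1 + 2*a) ^ a * N := by
  have hNpos : 0 < N := by linarith
  have ha0 : a ≠ 0 := by linarith
  set y : ℝ := N ^ (1/(2*a) : ℝ) with hy
  have hy1 : (1:ℝ) ≤ y := Real.one_le_rpow hN (by positivity)
  have hlog : Real.log N = (2*a) * Real.log y := by
    rw [hy, Real.log_rpow hNpos]
    field_simp
  have hlogy : Real.log y ≤ y - 1 := Real.log_le_sub_one_of_pos (by linarith)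
  have h1 : 1 + Real.log N ≤ (1+2*a) * y := by
    rw [hlog]
    nlinarith
  have h2 : (1 + Real.log N) ^ a ≤ ((1+2*a)*y)^a := by
    refine Real.rpow_le_rpow ?_ h1 (by linarith)
    nlinarith [Real.log_nonneg hN]
  have h3 : ((1+2*a)*y)^a = (1+2*a)^a * y^a :=
    Real.mul_rpow (by linarith) (by linarith)
  have h4 : y ^ a = N ^ ((1:ℝ)/2) := by
    rw [hy, ← Real.rpow_mul hNpos.le]
    congr 1
    field_simp
  have h5 : N ^ ((1:ℝ)/2) ≤ N := by
    calc N ^ ((1:ℝ)/2) ≤ N ^ (1:ℝ) :=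
          Real.rpow_le_rpow_of_exponent_le hN (by norm_num)
      _ = N := Real.rpow_one N
  calc (1 + Real.log N) ^ a ≤ (1+2*a)^a * y^a := h2.trans (le_of_eq h3)
    _ = (1+2*a)^a * N ^ ((1:ℝ)/2) := by rw [h4]
    _ ≤ (1+2*a)^a * N := by
        refine mul_le_mul_of_nonneg_left h5 ?_
        positivity



end Stmt17

open Stmt17

set_option maxHeartbeats 3200000 in
/-- Crude bound for ψ_r matrices: `(E ‖X_A : ℓ_p^n → ℓ_q^m‖²)^{1/2}
≲_{r,K,L} (m+n)^{1/r} ‖A∘A : ℓ_{p/2}^n → ℓ_{q/2}^m‖^{1/2}`. -/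
theorem stmt17 (r K L : ℝ) (hr0 : 0 < r) (hr2 : r ≤ 2) (hK : 0 < K) (hL : 0 < L) :
    ∃ C : ℝ, 0 < C ∧
    ∀ (Ω : Type) (_ : MeasurableSpace Ω) (μ : Measure Ω), IsProbabilityMeasure μ →
    ∀ (m n : ℕ) (X : Fin m → Fin n → Ω → ℝ),
    (∀ i j, Measurable (X i j)) →
    iIndepFun (fun ij : Fin m × Fin n => X ij.1 ij.2) μ →
    (∀ i j, Integrable (X i j) μ) →
    (∀ i j, ∫ ω, X i j ω ∂μ = 0) →
    (∀ i j, ∀ t : ℝ, 0 ≤ t →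
      μ {ω | t ≤ |X i j ω|} ≤ ENNReal.ofReal (K * Real.exp (-t ^ r / L))) →
    ∀ (A : Fin m → Fin n → ℝ) (p q : ℝ≥0∞), 1 ≤ p → 1 ≤ q →
    (∫⁻ ω, ENNReal.ofReal (opNorm p q (fun i j => A i j * X i j ω) ^ 2) ∂μ)
        ^ ((1 : ℝ) / 2) ≤
      ENNReal.ofReal (C * ((m + n : ℕ) : ℝ) ^ (1 / r) *
        Real.sqrt (opNorm (p / 2) (q / 2) (fun i j => A i j ^ 2))) := by
  classical
  obtain ⟨C₂, hC₂pos, hC₂⟩ := Stmt17.moment_bound r K L hr0 hK hL 2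
  obtain ⟨C₄, hC₄pos, hC₄⟩ := Stmt17.moment_bound r K L hr0 hK hL 4
  have hr2' : (1:ℝ) ≤ 2/r := by rw [le_div_iff₀ hr0]; linarith
  set a : ℝ := 1 + 2/r with ha
  have ha1 : (1:ℝ) ≤ a := by rw [ha]; linarith
  set Ctail : ℝ := Real.sqrt C₄ * Real.sqrt K with hCtaildef
  have hCtail0 : 0 ≤ Ctail := by positivity
  set Cp : ℝ := Real.exp 2 * C₂ +
      Real.exp 2 * ((6*L)^((2:ℝ)/r) * (1+2*a)^a) + Ctail + 1 with hCpdef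
  have hCp0 : (0:ℝ) < Cp := by
    have h1 : (0:ℝ) < Real.exp 2 * C₂ := by positivity
    have h2 : (0:ℝ) ≤ Real.exp 2 * ((6*L)^((2:ℝ)/r) * (1+2*a)^a) := by positivity
    rw [hCpdef]; linarith
  refine ⟨max 1 (Real.sqrt Cp), lt_of_lt_of_le one_pos (le_max_left _ _), ?_⟩
  intro Ω mΩ μ hμ m n X hXm hXind hXint hXmean hXtail A p q hp hq
  have hp0 := Stmt17.one_le_ne_zero hp
  have hq0 := Stmt17.one_le_ne_zero hq
  set C : ℝ := max 1 (Real.sqrt Cp) with hCdef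
  by_cases hmn : m = 0 ∨ n = 0
  · have hop : ∀ ω : Ω, opNorm p q (fun i j => A i j * X i j ω) = 0 := fun ω =>
      Stmt17.opNorm_zero_of_trivial hp0 hq0 _ hmn
    have hz : ∫⁻ ω, ENNReal.ofReal (opNorm p q (fun i j => A i j * X i j ω) ^ 2) ∂μ = 0 := by
      have hzz : ∀ ω : Ω, ENNReal.ofReal (opNorm p q (fun i j => A i j * X i j ω) ^ 2)
          = 0 := by
        intro ω; rw [hop ω]; norm_num
      rw [lintegral_congr hzz, lintegral_zero]
    rw [hz, ENNReal.zero_rpow_of_pos (by norm_num)]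
    exact bot_le
  push_neg at hmn
  have hm0 : m ≠ 0 := hmn.1
  have hn0 : n ≠ 0 := hmn.2
  have hm1 : (1:ℝ) ≤ m := by exact_mod_cast Nat.one_le_iff_ne_zero.2 hm0
  have hn1 : (1:ℝ) ≤ n := by exact_mod_cast Nat.one_le_iff_ne_zero.2 hn0
  set NR : ℝ := ((m+n:ℕ):ℝ) with hNRdef
  have hN1 : (1:ℝ) ≤ NR := by rw [hNRdef]; push_cast; linarith
  have hNpos : (0:ℝ) < NR := by linarith
  have hlog0 : 0 ≤ Real.log NR := Real.log_nonneg hN1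
  have hbase : (0:ℝ) < L*(4*Real.log NR + 2) := by nlinarith
  set T : ℝ := (L*(4*Real.log NR + 2)) ^ ((1:ℝ)/r) with hTdef
  have hT0 : 0 ≤ T := Real.rpow_nonneg hbase.le _
  have hTr : T ^ r = L*(4*Real.log NR + 2) := by
    rw [hTdef, ← Real.rpow_mul hbase.le, one_div_mul_cancel hr0.ne', Real.rpow_one]
  set B : ℝ := T^2 with hBdef
  have hB0 : 0 ≤ B := by positivity
  set t : ℕ := ⌊Real.log NR⌋₊ + 1 with htdef
  have ht1 : 1 ≤ t := Nat.le_add_left 1 _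
  have htpos : (0:ℝ) < (t:ℝ) := by exact_mod_cast Nat.lt_of_lt_of_le Nat.zero_lt_one ht1
  have htne : (t:ℝ) ≠ 0 := htpos.ne'
  have htub : (t:ℝ) ≤ Real.log NR + 1 := by
    rw [htdef]; push_cast
    have := Nat.floor_le hlog0
    linarith
  have htlb : Real.log NR ≤ (t:ℝ) := by
    rw [htdef]; push_cast
    exact (Nat.lt_floor_add_one _).le
  set opN : ℝ := opNorm (p/2) (q/2) (fun i j => A i j ^ 2) with hopNdef
  have hopN0 : 0 ≤ opN :=
    Stmt17.opNorm_nonneg (Stmt17.div_two_ne_zero hp) (Stmt17.div_two_ne_zero hq) _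
  -- deterministic pointwise bound
  have hdet : ∀ ω : Ω, ENNReal.ofReal (opNorm p q (fun i j => A i j * X i j ω) ^ 2) ≤
      ENNReal.ofReal opN * ENNReal.ofReal (⨆ i, ∑ j, (X i j ω)^2) := by
    intro ω
    have h := Stmt17.det_bound p q hp hq A (fun i j => X i j ω)
    have hM0 : 0 ≤ ⨆ i, ∑ j, (X i j ω)^2 :=
      Real.iSup_nonneg fun i => Finset.sum_nonneg fun j _ => sq_nonneg _
    calc ENNReal.ofReal (opNorm p q (fun i j => A i j * X i j ω) ^ 2)
        ≤ ENNReal.ofReal ((⨆ i, ∑ j, (X i j ω)^2) * opN) := ENNReal.ofReal_le_ofReal h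
      _ = ENNReal.ofReal opN * ENNReal.ofReal (⨆ i, ∑ j, (X i j ω)^2) := by
          rw [ENNReal.ofReal_mul hM0, mul_comm]
  -- truncation
  set W : Fin m → Fin n → Ω → ℝ :=
    fun i j ω => if T ≤ |X i j ω| then 0 else (X i j ω)^2 with hWdef
  set V : Fin m → Fin n → Ω → ℝ :=
    fun i j ω => if T ≤ |X i j ω| then (X i j ω)^2 else 0 with hVdef
  have hWmeas : ∀ i j, Measurable (W i j) := fun i j =>
    Measurable.ite (measurableSet_le measurable_const (hXm i j).abs) measurable_const
      ((hXm i j).pow_const 2)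
  have hVmeas : ∀ i j, Measurable (V i j) := fun i j =>
    Measurable.ite (measurableSet_le measurable_const (hXm i j).abs)
      ((hXm i j).pow_const 2) measurable_const
  have hW0 : ∀ i j ω, 0 ≤ W i j ω := by
    intro i j ω
    simp only [hWdef]
    split_ifs
    · exact le_refl 0
    · exact sq_nonneg _
  have hV0 : ∀ i j ω, 0 ≤ V i j ω := by
    intro i j ω
    simp only [hVdef]
    split_ifs
    · exact sq_nonneg _
    · exact le_refl 0
  have hWB : ∀ i j ω, W i j ω ≤ B := by
    intro i j ω
    simp only [hWdef]
    split_ifs with h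
    · exact hB0
    · push_neg at h
      calc (X i j ω)^2 = |X i j ω|^2 := (sq_abs _).symm
        _ ≤ T^2 := pow_le_pow_left₀ (abs_nonneg _) h.le 2
  have hWX : ∀ i j ω, W i j ω ≤ (X i j ω)^2 := by
    intro i j ω
    simp only [hWdef]
    split_ifs
    · exact sq_nonneg _
    · exact le_refl _
  have hWV : ∀ i j ω, W i j ω + V i j ω = (X i j ω)^2 := by
    intro i j ω
    simp only [hWdef, hVdef]
    split_ifs <;> ring
  -- second moments
  have hlint2 : ∀ i j, ∫⁻ ω, ENNReal.ofReal ((X i j ω)^2) ∂μ ≤ ENNReal.ofReal C₂ := by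
    intro i j
    have h := hC₂ Ω mΩ μ hμ (X i j) (hXm i j) (hXtail i j)
    calc ∫⁻ ω, ENNReal.ofReal ((X i j ω)^2) ∂μ
        = ∫⁻ ω, ENNReal.ofReal (|X i j ω|^2) ∂μ :=
          lintegral_congr fun ω => by rw [sq_abs]
      _ ≤ ENNReal.ofReal C₂ := h
  have hEW : ∀ i j, ∫ ω, W i j ω ∂μ ≤ C₂ := by
    intro i j
    have hint : Integrable (W i j) μ := by
      refine Stmt17.integrable_of_bounded (hWmeas i j) (C := B) fun ω => ?_
      rw [abs_of_nonneg (hW0 i j ω)]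
      exact hWB i j ω
    have h1 : ENNReal.ofReal (∫ ω, W i j ω ∂μ) = ∫⁻ ω, ENNReal.ofReal (W i j ω) ∂μ :=
      ofReal_integral_eq_lintegral_ofReal hint (ae_of_all _ (hW0 i j))
    have h2 : ∫⁻ ω, ENNReal.ofReal (W i j ω) ∂μ ≤ ENNReal.ofReal C₂ :=
      le_trans (lintegral_mono fun ω => ENNReal.ofReal_le_ofReal (hWX i j ω)) (hlint2 i j)
    refine (ENNReal.ofReal_le_ofReal_iff hC₂pos.le).1 ?_
    rw [h1]
    exact h2
  -- independence of W within rows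
  have hindW : ∀ (i : Fin m) (j : Fin n),
      IndepFun (fun ω => ∑ j' ∈ Finset.univ.erase j, W i j' ω) (W i j) μ := by
    intro i j
    have hgmeas : ∀ _ij : Fin m × Fin n,
        Measurable (fun v : ℝ => if T ≤ |v| then 0 else v^2) := fun _ =>
      Measurable.ite (measurableSet_le measurable_const measurable_abs) measurable_const
        (measurable_id.pow_const 2)
    have hWind : iIndepFun
        (fun ij : Fin m × Fin n => W ij.1 ij.2) μ := by
      have h := hXind.comp (fun _ (v:ℝ) => if T ≤ |v| then 0 else v^2) hgmeas
      exact h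
    set s' : Finset (Fin m × Fin n) := (Finset.univ.erase j).image (fun j' => (i, j'))
      with hs'def
    have hnm : (i, j) ∉ s' := by
      simp only [hs'def, Finset.mem_image]
      rintro ⟨j', hj', hj'eq⟩
      rw [Prod.mk.injEq] at hj'eq
      exact (Finset.ne_of_mem_erase hj') hj'eq.2
    have h := ProbabilityTheory.iIndepFun.indepFun_finset_sum_of_notMem hWind
      (fun ij => hWmeas ij.1 ij.2) hnm
    have hsum : (∑ ij ∈ s', fun ω => W ij.1 ij.2 ω)
        = fun ω => ∑ j' ∈ Finset.univ.erase j, W i j' ω := by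
      funext ω
      rw [Finset.sum_apply]
      rw [hs'def, Finset.sum_image (fun x _ y _ hxy => (Prod.ext_iff.1 hxy).2)]
    rw [hsum] at h
    exact h
  -- key induction
  set R : ℝ := (n:ℝ)*C₂ + t*B with hRdef
  have hR0 : 0 ≤ R := by positivity
  set SW : Fin m → Ω → ℝ := fun i ω => ∑ j, W i j ω with hSWdef
  have hSWmeas : ∀ i, Measurable (SW i) :=
    fun i => Finset.measurable_sum _ (fun j _ => hWmeas i j)
  have hSW0 : ∀ i ω, 0 ≤ SW i ω :=
    fun i ω => Finset.sum_nonneg fun j _ => hW0 i j ω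
  have hSWB : ∀ i ω, SW i ω ≤ (n:ℝ)*B := by
    intro i ω
    calc SW i ω ≤ ∑ _j : Fin n, B := Finset.sum_le_sum fun j _ => hWB i j ω
      _ = (n:ℝ)*B := by rw [Finset.sum_const]; simp [mul_comm]
  have hkey : ∀ i : Fin m, ∫ ω, (SW i ω)^t ∂μ ≤ R^t := by
    intro i
    have h := Stmt17.key_induction (μ := μ) (fun j => W i j) (fun j => hWmeas i j)
      hB0 hC₂pos.le (fun j ω => hW0 i j ω) (fun j ω => hWB i j ω)
      (fun j => hEW i j) (fun j => hindW i j) t 1 le_rfl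
    have hmono : ∫ ω, (SW i ω)^t ∂μ ≤ ∫ ω, (∑ j, W i j ω + 1*B)^t ∂μ := by
      refine integral_mono ?_ ?_ fun ω => ?_
      · refine Stmt17.integrable_of_bounded ((hSWmeas i).pow_const t)
          (C := ((n:ℝ)*B)^t) fun ω => ?_
        rw [abs_of_nonneg (pow_nonneg (hSW0 i ω) t)]
        exact pow_le_pow_left₀ (hSW0 i ω) (hSWB i ω) t
      · refine Stmt17.integrable_of_bounded (((hSWmeas i).add_const _).pow_const t)
          (C := ((n:ℝ)*B + 1*B)^t) fun ω => ?_
        have h1 := hSW0 i ω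
        have h2 := hSWB i ω
        rw [abs_of_nonneg (pow_nonneg (by simp only [hSWdef] at h1 ⊢; linarith) t)]
        refine pow_le_pow_left₀ (by simp only [hSWdef] at h1 ⊢; linarith) ?_ t
        simp only [hSWdef] at h2 ⊢
        linarith
      · refine pow_le_pow_left₀ (hSW0 i ω) ?_ t
        have := hB0
        simp only [hSWdef]
        linarith
    calc ∫ ω, (SW i ω)^t ∂μ ≤ ∫ ω, (∑ j, W i j ω + 1*B)^t ∂μ := hmono
      _ ≤ ((n:ℝ)*C₂ + ((1:ℝ) + t - 1)*B)^t := h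
      _ = R^t := by rw [hRdef]; ring_nf
  -- bound on the V part
  have hVij : ∀ i j, ∫⁻ ω, ENNReal.ofReal (V i j ω) ∂μ ≤
      ENNReal.ofReal (Real.sqrt C₄ * Real.sqrt (K * Real.exp (-T^r/L))) := by
    intro i j
    have h1 := Stmt17.truncated_second_moment μ (X i j) (hXm i j) T
    have h4 := hC₄ Ω mΩ μ hμ (X i j) (hXm i j) (hXtail i j)
    have h2 : (∫⁻ ω, ENNReal.ofReal (|X i j ω|^4) ∂μ) ^ ((1:ℝ)/2)
        ≤ (ENNReal.ofReal C₄) ^ ((1:ℝ)/2) := ENNReal.rpow_le_rpow h4 (by norm_num)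
    have h3 : (μ {ω | T ≤ |X i j ω|}) ^ ((1:ℝ)/2)
        ≤ (ENNReal.ofReal (K * Real.exp (-T^r/L))) ^ ((1:ℝ)/2) :=
      ENNReal.rpow_le_rpow (hXtail i j T hT0) (by norm_num)
    calc ∫⁻ ω, ENNReal.ofReal (V i j ω) ∂μ
        ≤ (∫⁻ ω, ENNReal.ofReal (|X i j ω| ^ 4) ∂μ) ^ ((1:ℝ)/2) *
            (μ {ω | T ≤ |X i j ω|}) ^ ((1:ℝ)/2) := h1
      _ ≤ (ENNReal.ofReal C₄) ^ ((1:ℝ)/2) *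
            (ENNReal.ofReal (K * Real.exp (-T^r/L))) ^ ((1:ℝ)/2) := mul_le_mul' h2 h3
      _ = ENNReal.ofReal (Real.sqrt C₄ * Real.sqrt (K * Real.exp (-T^r/L))) := by
          rw [ENNReal.ofReal_rpow_of_nonneg hC₄pos.le (by norm_num),
            ENNReal.ofReal_rpow_of_nonneg (by positivity) (by norm_num),
            ← ENNReal.ofReal_mul (by positivity)]
          rw [← Real.sqrt_eq_rpow, ← Real.sqrt_eq_rpow]
  have hVreal : (m:ℝ)*(n:ℝ) * (Real.sqrt C₄ * Real.sqrt (K * Real.exp (-T^r/L)))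
      ≤ Ctail := by
    have hTrL : -T^r/L = -(4*Real.log NR + 2) := by
      rw [hTr, neg_div, mul_div_cancel_left₀ _ hL.ne']
    have hsqexp : Real.sqrt (Real.exp (-(4*Real.log NR + 2)))
        = Real.exp (-(2*Real.log NR + 1)) := by
      rw [show Real.exp (-(4*Real.log NR + 2))
          = (Real.exp (-(2*Real.log NR + 1)))^2 by
        rw [sq, ← Real.exp_add]; ring_nf]
      exact Real.sqrt_sq (Real.exp_pos _).le
    have hmn2 : (m:ℝ)*(n:ℝ) ≤ NR^2 := by
      rw [hNRdef]; push_cast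
      nlinarith [sq_nonneg ((m:ℝ)), sq_nonneg ((n:ℝ)), mul_nonneg (by linarith : (0:ℝ) ≤ (m:ℝ)) (by linarith : (0:ℝ) ≤ (n:ℝ))]
    have hexp2 : NR^2 = Real.exp (2*Real.log NR) := by
      rw [show (2:ℝ)*Real.log NR = Real.log NR + Real.log NR by ring, Real.exp_add,
        Real.exp_log hNpos, sq]
    have hkey2 : (m:ℝ)*(n:ℝ) * Real.exp (-(2*Real.log NR + 1)) ≤ 1 := by
      calc (m:ℝ)*(n:ℝ) * Real.exp (-(2*Real.log NR + 1))
          ≤ Real.exp (2*Real.log NR) * Real.exp (-(2*Real.log NR + 1)) := by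
            refine mul_le_mul_of_nonneg_right ?_ (Real.exp_pos _).le
            rw [← hexp2]; exact hmn2
        _ = Real.exp (-1) := by rw [← Real.exp_add]; ring_nf
        _ ≤ 1 := Real.exp_le_one_iff.2 (by norm_num)
    rw [hTrL, Real.sqrt_mul hK.le, hsqexp, hCtaildef]
    calc (m:ℝ)*(n:ℝ) * (Real.sqrt C₄ * (Real.sqrt K * Real.exp (-(2*Real.log NR + 1))))
        = (Real.sqrt C₄ * Real.sqrt K) * ((m:ℝ)*(n:ℝ) * Real.exp (-(2*Real.log NR + 1))) := by
          ring
      _ ≤ (Real.sqrt C₄ * Real.sqrt K) * 1 :=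
          mul_le_mul_of_nonneg_left hkey2 (by positivity)
      _ = Real.sqrt C₄ * Real.sqrt K := mul_one _
  have hVtot : ∫⁻ ω, ENNReal.ofReal (∑ i, ∑ j, V i j ω) ∂μ ≤ ENNReal.ofReal Ctail := by
    have hpt : ∀ ω : Ω, ENNReal.ofReal (∑ i, ∑ j, V i j ω)
        = ∑ i, ∑ j, ENNReal.ofReal (V i j ω) := by
      intro ω
      rw [ENNReal.ofReal_sum_of_nonneg
        (fun i _ => Finset.sum_nonneg fun j _ => hV0 i j ω)]
      exact Finset.sum_congr rfl fun i _ =>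
        ENNReal.ofReal_sum_of_nonneg (fun j _ => hV0 i j ω)
    rw [lintegral_congr hpt]
    rw [lintegral_finset_sum _ (fun i _ => Finset.measurable_sum _
      (fun j _ => (hVmeas i j).ennreal_ofReal))]
    have hj : ∀ i : Fin m, ∫⁻ ω, ∑ j, ENNReal.ofReal (V i j ω) ∂μ
        = ∑ j, ∫⁻ ω, ENNReal.ofReal (V i j ω) ∂μ := fun i =>
      lintegral_finset_sum _ (fun j _ => (hVmeas i j).ennreal_ofReal)
    calc ∑ i, ∫⁻ ω, ∑ j, ENNReal.ofReal (V i j ω) ∂μ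
        = ∑ i : Fin m, ∑ j : Fin n, ∫⁻ ω, ENNReal.ofReal (V i j ω) ∂μ :=
          Finset.sum_congr rfl fun i _ => hj i
      _ ≤ ∑ _i : Fin m, ∑ _j : Fin n,
            ENNReal.ofReal (Real.sqrt C₄ * Real.sqrt (K * Real.exp (-T^r/L))) :=
          Finset.sum_le_sum fun i _ => Finset.sum_le_sum fun j _ => hVij i j
      _ = (m*n : ℕ) * ENNReal.ofReal (Real.sqrt C₄ * Real.sqrt (K * Real.exp (-T^r/L))) := by
          rw [Finset.sum_const, Finset.sum_const]
          simp [mul_comm, mul_assoc, mul_left_comm]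
      _ ≤ ENNReal.ofReal Ctail := by
          rw [← ENNReal.ofReal_natCast (m*n),
            ← ENNReal.ofReal_mul (by positivity)]
          refine ENNReal.ofReal_le_ofReal ?_
          calc ((m*n:ℕ):ℝ) * (Real.sqrt C₄ * Real.sqrt (K * Real.exp (-T^r/L)))
              = (m:ℝ)*(n:ℝ) * (Real.sqrt C₄ * Real.sqrt (K * Real.exp (-T^r/L))) := by
                push_cast; ring
            _ ≤ Ctail := hVreal
  -- the maximum part
  set F : Ω → ℝ≥0∞ := fun ω => ENNReal.ofReal (∑ i, SW i ω ^ t) with hFdef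
  have hFmeas : Measurable F := ENNReal.measurable_ofReal.comp
    (Finset.measurable_sum _ fun i _ => (hSWmeas i).pow_const t)
  set G : Ω → ℝ≥0∞ := fun ω => F ω ^ ((1:ℝ)/t) with hGdef
  have hGmeas : Measurable G :=
    ENNReal.continuous_rpow_const.measurable.comp hFmeas
  have hMpt : ∀ ω : Ω, ENNReal.ofReal (⨆ i, ∑ j, (X i j ω)^2) ≤
      G ω + ENNReal.ofReal (∑ i, ∑ j, V i j ω) := by
    intro ω
    have hreal : (⨆ i, ∑ j, (X i j ω)^2) ≤
        (∑ i, SW i ω ^ t) ^ ((1:ℝ)/t) + ∑ i, ∑ j, V i j ω := by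
      have hsum0 : (0:ℝ) ≤ ∑ i, SW i ω ^ t :=
        Finset.sum_nonneg fun i _ => pow_nonneg (hSW0 i ω) t
      have hVsum0 : (0:ℝ) ≤ ∑ i, ∑ j, V i j ω :=
        Finset.sum_nonneg fun i _ => Finset.sum_nonneg fun j _ => hV0 i j ω
      refine Real.iSup_le (fun i => ?_) (by positivity)
      have h1 : ∑ j, (X i j ω)^2 = SW i ω + ∑ j, V i j ω := by
        simp only [hSWdef]
        rw [← Finset.sum_add_distrib]
        exact Finset.sum_congr rfl fun j _ => (hWV i j ω).symm
      have h2 : ∑ j, V i j ω ≤ ∑ i', ∑ j, V i' j ω :=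
        Finset.single_le_sum
          (fun i' _ => Finset.sum_nonneg fun j _ => hV0 i' j ω) (Finset.mem_univ i)
      have h3 : SW i ω ≤ (∑ i', SW i' ω ^ t) ^ ((1:ℝ)/t) := by
        have h4 : SW i ω = (SW i ω ^ t) ^ ((1:ℝ)/t) := by
          rw [← Real.rpow_natCast (SW i ω) t, ← Real.rpow_mul (hSW0 i ω),
            mul_one_div_cancel htne, Real.rpow_one]
        rw [h4]
        exact Real.rpow_le_rpow (by positivity)
          (Finset.single_le_sum (fun i' _ => pow_nonneg (hSW0 i' ω) t)
            (Finset.mem_univ i)) (by positivity)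
      linarith
    calc ENNReal.ofReal (⨆ i, ∑ j, (X i j ω)^2)
        ≤ ENNReal.ofReal ((∑ i, SW i ω ^ t) ^ ((1:ℝ)/t) + ∑ i, ∑ j, V i j ω) :=
          ENNReal.ofReal_le_ofReal hreal
      _ ≤ ENNReal.ofReal ((∑ i, SW i ω ^ t) ^ ((1:ℝ)/t)) +
            ENNReal.ofReal (∑ i, ∑ j, V i j ω) := ENNReal.ofReal_add_le
      _ = G ω + ENNReal.ofReal (∑ i, ∑ j, V i j ω) := by
          simp only [hGdef, hFdef]
          rw [ENNReal.ofReal_rpow_of_nonneg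
            (Finset.sum_nonneg fun i _ => pow_nonneg (hSW0 i ω) t) (by positivity)]
  have hGint : ∫⁻ ω, G ω ∂μ ≤ ENNReal.ofReal (Real.exp 2 * R) := by
    have hJ : ∫⁻ ω, G ω ∂μ ≤ (∫⁻ ω, F ω ∂μ) ^ ((1:ℝ)/t) :=
      Stmt17.lintegral_rpow_inv_le μ hFmeas.aemeasurable (by positivity)
        (by rw [div_le_one htpos]; exact_mod_cast ht1)
    have hFint : ∫⁻ ω, F ω ∂μ ≤ (m : ℝ≥0∞) * ENNReal.ofReal (R^t) := by
      have h1 : ∀ ω : Ω, F ω = ∑ i, ENNReal.ofReal (SW i ω ^ t) := fun ω =>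
        ENNReal.ofReal_sum_of_nonneg (fun i _ => pow_nonneg (hSW0 i ω) t)
      rw [lintegral_congr h1, lintegral_finset_sum _
        (fun i _ => ((hSWmeas i).pow_const t).ennreal_ofReal)]
      have h2 : ∀ i : Fin m, ∫⁻ ω, ENNReal.ofReal (SW i ω ^ t) ∂μ ≤
          ENNReal.ofReal (R^t) := by
        intro i
        have hint : Integrable (fun ω => SW i ω ^ t) μ := by
          refine Stmt17.integrable_of_bounded ((hSWmeas i).pow_const t)
            (C := ((n:ℝ)*B)^t) fun ω => ?_
          rw [abs_of_nonneg (pow_nonneg (hSW0 i ω) t)]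
          exact pow_le_pow_left₀ (hSW0 i ω) (hSWB i ω) t
        rw [← ofReal_integral_eq_lintegral_ofReal hint
          (ae_of_all _ fun ω => pow_nonneg (hSW0 i ω) t)]
        exact ENNReal.ofReal_le_ofReal (hkey i)
      calc ∑ i, ∫⁻ ω, ENNReal.ofReal (SW i ω ^ t) ∂μ
          ≤ ∑ _i : Fin m, ENNReal.ofReal (R^t) := Finset.sum_le_sum fun i _ => h2 i
        _ = (m : ℝ≥0∞) * ENNReal.ofReal (R^t) := by
            rw [Finset.sum_const]
            simp [mul_comm]
    have hmbound : ((m:ℝ≥0∞)) ^ ((1:ℝ)/t) ≤ ENNReal.ofReal (Real.exp 2) := by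
      rw [← ENNReal.ofReal_natCast m,
        ENNReal.ofReal_rpow_of_nonneg (Nat.cast_nonneg m) (by positivity)]
      refine ENNReal.ofReal_le_ofReal ?_
      have hm2 : (m:ℝ) ≤ NR^2 := by
        rw [hNRdef]; push_cast
        nlinarith [sq_nonneg ((m:ℝ)), sq_nonneg ((n:ℝ)), mul_nonneg (by linarith : (0:ℝ) ≤ (m:ℝ)) (by linarith : (0:ℝ) ≤ (n:ℝ))]
      have h1 : Real.log m ≤ 2 * Real.log NR := by
        calc Real.log m ≤ Real.log (NR^2) := Real.log_le_log (by linarith) hm2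
          _ = 2 * Real.log NR := by
              rw [Real.log_pow]; push_cast; ring
      rw [Real.rpow_def_of_pos (by linarith : (0:ℝ) < (m:ℝ))]
      refine Real.exp_le_exp.2 ?_
      calc Real.log m * ((1:ℝ)/t) ≤ (2*Real.log NR) * ((1:ℝ)/t) :=
            mul_le_mul_of_nonneg_right h1 (by positivity)
        _ ≤ 2 := by
            rw [mul_one_div, div_le_iff₀ htpos]
            nlinarith [htlb]
    calc ∫⁻ ω, G ω ∂μ ≤ (∫⁻ ω, F ω ∂μ) ^ ((1:ℝ)/t) := hJ
      _ ≤ ((m : ℝ≥0∞) * ENNReal.ofReal (R^t)) ^ ((1:ℝ)/t) :=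
          ENNReal.rpow_le_rpow hFint (by positivity)
      _ = (m : ℝ≥0∞) ^ ((1:ℝ)/t) * (ENNReal.ofReal (R^t)) ^ ((1:ℝ)/t) :=
          ENNReal.mul_rpow_of_nonneg _ _ (by positivity)
      _ ≤ ENNReal.ofReal (Real.exp 2) * ENNReal.ofReal R := by
          refine mul_le_mul' hmbound (le_of_eq ?_)
          rw [ENNReal.ofReal_rpow_of_nonneg (by positivity) (by positivity)]
          congr 1
          rw [← Real.rpow_natCast R t, ← Real.rpow_mul hR0, mul_one_div_cancel htne,
            Real.rpow_one]
      _ = ENNReal.ofReal (Real.exp 2 * R) :=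
          (ENNReal.ofReal_mul (Real.exp_pos 2).le).symm
  -- combine into bound on E M
  have hfinal_real : Real.exp 2 * R + Ctail ≤ Cp * NR^((2:ℝ)/r) := by
    have hN2r1 : (1:ℝ) ≤ NR^((2:ℝ)/r) := Real.one_le_rpow hN1 (by positivity)
    have hNle : NR ≤ NR^((2:ℝ)/r) := by
      calc NR = NR^(1:ℝ) := (Real.rpow_one _).symm
        _ ≤ NR^((2:ℝ)/r) := Real.rpow_le_rpow_of_exponent_le hN1 hr2'
    have hnN : (n:ℝ) ≤ NR := by rw [hNRdef]; push_cast; linarith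
    have hBle : B ≤ (6*L)^((2:ℝ)/r) * (1+Real.log NR)^((2:ℝ)/r) := by
      have h1 : B = (L*(4*Real.log NR + 2))^((2:ℝ)/r) := by
        rw [hBdef, hTdef, ← Real.rpow_natCast _ 2, ← Real.rpow_mul hbase.le]
        congr 1
        push_cast
        field_simp
      have h2 : L*(4*Real.log NR + 2) ≤ (6*L) * (1+Real.log NR) := by nlinarith
      rw [h1]
      calc (L*(4*Real.log NR + 2))^((2:ℝ)/r)
          ≤ ((6*L)*(1+Real.log NR))^((2:ℝ)/r) :=
            Real.rpow_le_rpow hbase.le h2 (by positivity)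
        _ = (6*L)^((2:ℝ)/r) * (1+Real.log NR)^((2:ℝ)/r) :=
            Real.mul_rpow (by positivity) (by positivity)
    have htB : (t:ℝ)*B ≤ (6*L)^((2:ℝ)/r) * ((1+2*a)^a * NR) := by
      calc (t:ℝ)*B ≤ (1+Real.log NR) * ((6*L)^((2:ℝ)/r) * (1+Real.log NR)^((2:ℝ)/r)) := by
            refine mul_le_mul (by linarith) hBle hB0 (by positivity)
        _ = (6*L)^((2:ℝ)/r) * ((1+Real.log NR)^(1:ℝ) * (1+Real.log NR)^((2:ℝ)/r)) := by
            rw [Real.rpow_one]; ring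
        _ = (6*L)^((2:ℝ)/r) * (1+Real.log NR)^a := by
            rw [← Real.rpow_add (by linarith : (0:ℝ) < 1 + Real.log NR), ha]
        _ ≤ (6*L)^((2:ℝ)/r) * ((1+2*a)^a * NR) := by
            refine mul_le_mul_of_nonneg_left (Stmt17.one_add_log_rpow_le ha1 hN1) ?_
            positivity
    have hA1 : Real.exp 2 * ((n:ℝ)*C₂) ≤ (Real.exp 2 * C₂) * NR^((2:ℝ)/r) := by
      have h := hnN.trans hNle
      calc Real.exp 2 * ((n:ℝ)*C₂) = (Real.exp 2 * C₂) * (n:ℝ) := by ring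
        _ ≤ (Real.exp 2 * C₂) * NR^((2:ℝ)/r) :=
          mul_le_mul_of_nonneg_left h (by positivity)
    have hA2 : Real.exp 2 * ((t:ℝ)*B) ≤
        (Real.exp 2 * ((6*L)^((2:ℝ)/r) * (1+2*a)^a)) * NR^((2:ℝ)/r) := by
      have h6 : (0:ℝ) ≤ (6*L)^((2:ℝ)/r) * (1+2*a)^a := by positivity
      have h5 : (6*L)^((2:ℝ)/r) * ((1+2*a)^a * NR) ≤
          ((6*L)^((2:ℝ)/r) * (1+2*a)^a) * NR^((2:ℝ)/r) := by
        calc (6*L)^((2:ℝ)/r) * ((1+2*a)^a * NR)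
            = ((6*L)^((2:ℝ)/r) * (1+2*a)^a) * NR := by ring
          _ ≤ ((6*L)^((2:ℝ)/r) * (1+2*a)^a) * NR^((2:ℝ)/r) :=
            mul_le_mul_of_nonneg_left hNle h6
      calc Real.exp 2 * ((t:ℝ)*B)
          ≤ Real.exp 2 * ((6*L)^((2:ℝ)/r) * ((1+2*a)^a * NR)) :=
            mul_le_mul_of_nonneg_left htB (Real.exp_pos 2).le
        _ ≤ Real.exp 2 * (((6*L)^((2:ℝ)/r) * (1+2*a)^a) * NR^((2:ℝ)/r)) :=
            mul_le_mul_of_nonneg_left h5 (Real.exp_pos 2).le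
        _ = (Real.exp 2 * ((6*L)^((2:ℝ)/r) * (1+2*a)^a)) * NR^((2:ℝ)/r) := by ring
    have hA3 : Ctail ≤ Ctail * NR^((2:ℝ)/r) := le_mul_of_one_le_right hCtail0 hN2r1
    have expand : Cp * NR^((2:ℝ)/r) = (Real.exp 2 * C₂) * NR^((2:ℝ)/r) +
        (Real.exp 2 * ((6*L)^((2:ℝ)/r) * (1+2*a)^a)) * NR^((2:ℝ)/r) +
        Ctail * NR^((2:ℝ)/r) + NR^((2:ℝ)/r) := by
      rw [hCpdef]; ring
    have hdistrib : Real.exp 2 * R = Real.exp 2 * ((n:ℝ)*C₂) + Real.exp 2 * ((t:ℝ)*B) := by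
      rw [hRdef]; ring
    rw [expand, hdistrib]
    linarith
  have hEM : ∫⁻ ω, ENNReal.ofReal (⨆ i, ∑ j, (X i j ω)^2) ∂μ ≤
      ENNReal.ofReal (Cp * NR^((2:ℝ)/r)) := by
    calc ∫⁻ ω, ENNReal.ofReal (⨆ i, ∑ j, (X i j ω)^2) ∂μ
        ≤ ∫⁻ ω, (G ω + ENNReal.ofReal (∑ i, ∑ j, V i j ω)) ∂μ := lintegral_mono hMpt
      _ = ∫⁻ ω, G ω ∂μ + ∫⁻ ω, ENNReal.ofReal (∑ i, ∑ j, V i j ω) ∂μ :=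
          lintegral_add_left hGmeas _
      _ ≤ ENNReal.ofReal (Real.exp 2 * R) + ENNReal.ofReal Ctail := add_le_add hGint hVtot
      _ = ENNReal.ofReal (Real.exp 2 * R + Ctail) :=
          (ENNReal.ofReal_add (by positivity) hCtail0).symm
      _ ≤ ENNReal.ofReal (Cp * NR^((2:ℝ)/r)) := ENNReal.ofReal_le_ofReal hfinal_real
  -- final assembly
  have hmain : ∫⁻ ω, ENNReal.ofReal (opNorm p q (fun i j => A i j * X i j ω) ^ 2) ∂μ ≤
      ENNReal.ofReal opN * ENNReal.ofReal (Cp * NR^((2:ℝ)/r)) := by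
    calc ∫⁻ ω, ENNReal.ofReal (opNorm p q (fun i j => A i j * X i j ω) ^ 2) ∂μ
        ≤ ∫⁻ ω, ENNReal.ofReal opN * ENNReal.ofReal (⨆ i, ∑ j, (X i j ω)^2) ∂μ :=
          lintegral_mono hdet
      _ = ENNReal.ofReal opN * ∫⁻ ω, ENNReal.ofReal (⨆ i, ∑ j, (X i j ω)^2) ∂μ :=
          lintegral_const_mul' _ _ ENNReal.ofReal_ne_top
      _ ≤ ENNReal.ofReal opN * ENNReal.ofReal (Cp * NR^((2:ℝ)/r)) :=
          mul_le_mul' le_rfl hEM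
  have hlast : (opN * (Cp * NR^((2:ℝ)/r))) ^ ((1:ℝ)/2) ≤
      C * NR^((1:ℝ)/r) * Real.sqrt opN := by
    rw [← Real.sqrt_eq_rpow]
    rw [Real.sqrt_mul hopN0, Real.sqrt_mul hCp0.le]
    have h1 : Real.sqrt (NR^((2:ℝ)/r)) = NR^((1:ℝ)/r) := by
      rw [Real.sqrt_eq_rpow, ← Real.rpow_mul hNpos.le]
      congr 1
      ring
    rw [h1]
    have h2 : Real.sqrt Cp ≤ C := le_max_right _ _
    have h3 : (0:ℝ) ≤ NR^((1:ℝ)/r) := Real.rpow_nonneg hNpos.le _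
    calc Real.sqrt opN * (Real.sqrt Cp * NR^((1:ℝ)/r))
        = (Real.sqrt Cp * NR^((1:ℝ)/r)) * Real.sqrt opN := mul_comm _ _
      _ ≤ (C * NR^((1:ℝ)/r)) * Real.sqrt opN := by
          refine mul_le_mul_of_nonneg_right ?_ (Real.sqrt_nonneg _)
          exact mul_le_mul_of_nonneg_right h2 h3
      _ = C * NR^((1:ℝ)/r) * Real.sqrt opN := rfl
  calc (∫⁻ ω, ENNReal.ofReal (opNorm p q (fun i j => A i j * X i j ω) ^ 2) ∂μ) ^ ((1:ℝ)/2)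
      ≤ (ENNReal.ofReal opN * ENNReal.ofReal (Cp * NR^((2:ℝ)/r))) ^ ((1:ℝ)/2) :=
        ENNReal.rpow_le_rpow hmain (by norm_num)
    _ = ENNReal.ofReal ((opN * (Cp * NR^((2:ℝ)/r))) ^ ((1:ℝ)/2)) := by
        rw [← ENNReal.ofReal_mul hopN0,
          ENNReal.ofReal_rpow_of_nonneg (by positivity) (by norm_num)]
    _ ≤ ENNReal.ofReal (C * NR^((1:ℝ)/r) * Real.sqrt opN) :=
        ENNReal.ofReal_le_ofReal hlast
    _ = ENNReal.ofReal (C * ((m + n : ℕ) : ℝ) ^ (1 / r) *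
        Real.sqrt (opNorm (p / 2) (q / 2) (fun i j => A i j ^ 2))) := by
        rw [hNRdef, hopNdef]
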